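/- For all y ∈ ℝ, Σ_{r ∈ ℤ} sinc²(y - r) = 1, where sinc(ξ) = sin(πξ)/(πξ) and sinc(0) = 1. -/

import Mathlib

open scoped Real

/-- Normalized sinc: sinc ξ = sin(πξ)/(πξ), sinc 0 = 1. -/
noncomputable def sinc (x : ℝ) : ℝ :=
  if x = 0 then 1 else Real.sin (π * x) / (π * x)

namespace SincPOU

open MeasureTheory Complex Filter Set intervalIntegral
open scoped FourierTransform

/-- The triangle (hat) function. -/
noncomputable def tri (v : ℝ) : ℝ := max 0 (1 - |v|)

lemma tri_zero : tri 0 = 1 := by simp [tri]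

lemma tri_eq_zero {v : ℝ} (h : 1 ≤ |v|) : tri v = 0 :=
  max_eq_left (by linarith)

lemma tri_continuous : Continuous tri :=
  continuous_const.max (continuous_const.sub continuous_abs)

lemma sinc_neg (x : ℝ) : sinc (-x) = sinc x := by
  unfold sinc
  rcases eq_or_ne x 0 with h | h
  · simp [h]
  · rw [if_neg (neg_ne_zero.mpr h), if_neg h, mul_neg, Real.sin_neg, neg_div_neg_eq]

lemma sinc_zero : sinc 0 = 1 := by simp [sinc]

lemma sinc_sq_le_one (x : ℝ) : sinc x ^ 2 ≤ 1 := by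
  unfold sinc
  split_ifs with h
  · norm_num
  · rw [div_pow, div_le_one (by positivity)]
    calc Real.sin (π * x) ^ 2 = |Real.sin (π * x)| ^ 2 := (_root_.sq_abs _).symm
      _ ≤ |π * x| ^ 2 := pow_le_pow_left₀ (abs_nonneg _) Real.abs_sin_le_abs 2
      _ = (π * x) ^ 2 := _root_.sq_abs _

lemma sinc_sq_le_inv (x : ℝ) (hx : x ≠ 0) : sinc x ^ 2 ≤ 1 / x ^ 2 := by
  unfold sinc
  rw [if_neg hx, div_pow]
  have h1 : Real.sin (π * x) ^ 2 ≤ 1 := Real.sin_sq_le_one _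
  have hπ : (1 : ℝ) ≤ π := by linarith [Real.pi_gt_three]
  have hx2 : (0 : ℝ) < x ^ 2 := by positivity
  have hπ2 : (1 : ℝ) ≤ π ^ 2 := by nlinarith
  have hle : x ^ 2 ≤ (π * x) ^ 2 := by
    have : (π * x) ^ 2 = π ^ 2 * x ^ 2 := by ring
    nlinarith
  exact div_le_div₀ (by norm_num) h1 hx2 hle

lemma sinc_sq_le_two_div (x : ℝ) : sinc x ^ 2 ≤ 2 / (1 + x ^ 2) := by
  rcases le_or_gt (x ^ 2) 1 with h | h
  · have h2 : 1 + x ^ 2 ≤ 2 := by linarith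
    have := sinc_sq_le_one x
    have hpos : (0 : ℝ) < 1 + x ^ 2 := by positivity
    rw [le_div_iff₀ hpos]
    nlinarith
  · have hx : x ≠ 0 := by
      intro h0; rw [h0] at h; norm_num at h
    have h1 := sinc_sq_le_inv x hx
    have hpos : (0 : ℝ) < 1 + x ^ 2 := by positivity
    have hx2 : (0 : ℝ) < x ^ 2 := by positivity
    have : 1 / x ^ 2 ≤ 2 / (1 + x ^ 2) := by
      rw [div_le_div_iff₀ hx2 hpos]; nlinarith
    linarith

/-- The Fourier transform of the triangle function is sinc². -/
lemma key_integral (x : ℝ) :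
    ∫ v : ℝ, Complex.exp ((-2 * π * v * x : ℝ) * Complex.I) * (tri v : ℂ)
      = ((sinc x ^ 2 : ℝ) : ℂ) := by
  have hcont : Continuous fun v : ℝ =>
      Complex.exp ((-2 * π * v * x : ℝ) * Complex.I) * (tri v : ℂ) := by
    apply Continuous.mul
    · exact Complex.continuous_exp.comp
        ((Complex.continuous_ofReal.comp (by continuity)).mul continuous_const)
    · exact Complex.continuous_ofReal.comp tri_continuous
  have hsupp : ∀ v : ℝ, v ∉ Icc (-1 : ℝ) 1 →
      Complex.exp ((-2 * π * v * x : ℝ) * Complex.I) * (tri v : ℂ) = 0 := by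
    intro v hv
    have h1 : 1 ≤ |v| := by
      rw [mem_Icc, not_and_or, not_le, not_le] at hv
      rcases hv with h | h
      · rw [le_abs]; right; linarith
      · rw [le_abs]; left; linarith
    rw [tri_eq_zero h1, Complex.ofReal_zero, mul_zero]
  rw [← setIntegral_eq_integral_of_forall_compl_eq_zero hsupp,
    integral_Icc_eq_integral_Ioc, ← intervalIntegral.integral_of_le (by norm_num : (-1:ℝ) ≤ 1),
    ← intervalIntegral.integral_add_adjacent_intervals (a := (-1:ℝ)) (b := 0) (c := 1)
      (hcont.intervalIntegrable _ _) (hcont.intervalIntegrable _ _)]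
  have hL : (∫ v in (-1:ℝ)..0, Complex.exp ((-2 * π * v * x : ℝ) * Complex.I) * (tri v : ℂ))
      = ∫ v in (-1:ℝ)..0, Complex.exp ((-2 * π * v * x : ℝ) * Complex.I) * ((1 + v : ℝ) : ℂ) := by
    apply intervalIntegral.integral_congr
    intro v hv
    rw [uIcc_of_le (by norm_num : (-1:ℝ) ≤ 0), mem_Icc] at hv
    have : tri v = 1 + v := by
      rw [tri, _root_.abs_of_nonpos hv.2,
        max_eq_right (by linarith [hv.1] : (0:ℝ) ≤ 1 - -v)]
      ring
    simp only [this]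
  have hR : (∫ v in (0:ℝ)..1, Complex.exp ((-2 * π * v * x : ℝ) * Complex.I) * (tri v : ℂ))
      = ∫ v in (0:ℝ)..1, Complex.exp ((-2 * π * v * x : ℝ) * Complex.I) * ((1 - v : ℝ) : ℂ) := by
    apply intervalIntegral.integral_congr
    intro v hv
    rw [uIcc_of_le (by norm_num : (0:ℝ) ≤ 1), mem_Icc] at hv
    have : tri v = 1 - v := by
      rw [tri, _root_.abs_of_nonneg hv.1,
        max_eq_right (by linarith [hv.2] : (0:ℝ) ≤ 1 - v)]
    simp only [this]
  rw [hL, hR]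
  rcases eq_or_ne x 0 with hx | hx
  · subst hx
    simp only [mul_zero, Complex.ofReal_zero, zero_mul, Complex.exp_zero, one_mul, sinc_zero,
      one_pow, Complex.ofReal_one]
    rw [intervalIntegral.integral_ofReal, intervalIntegral.integral_ofReal]
    have h1 : (∫ v in (-1:ℝ)..0, (1 + v)) = 1/2 := by
      rw [integral_add intervalIntegrable_const intervalIntegrable_id]
      simp [integral_id]
      norm_num
    have h2 : (∫ v in (0:ℝ)..1, (1 - v)) = 1/2 := by
      rw [integral_sub intervalIntegrable_const intervalIntegrable_id]
      simp [integral_id]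
      norm_num
    rw [h1, h2]
    norm_num
  · -- x ≠ 0
    set c : ℂ := ((-2 * π * x : ℝ) : ℂ) * Complex.I with hc
    clear_value c
    have hcne : c ≠ 0 := by
      rw [hc]
      apply mul_ne_zero _ Complex.I_ne_zero
      rw [Complex.ofReal_ne_zero]
      have := Real.pi_pos
      intro h0
      apply hx
      nlinarith
    have hexp : ∀ v : ℝ, ((-2 * π * v * x : ℝ) : ℂ) * Complex.I = c * v := by
      intro v; rw [hc]; push_cast; ring
    have hEder : ∀ v : ℝ, HasDerivAt (fun v : ℝ => Complex.exp (c * v))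
        (c * Complex.exp (c * v)) v := by
      intro v
      have h0 : HasDerivAt (fun z : ℂ => c * z) c (v:ℂ) := by
        simpa using (hasDerivAt_id (v:ℂ)).const_mul c
      have h1 := (Complex.hasDerivAt_exp (c * (v:ℂ))).comp (v:ℂ) h0
      rw [mul_comm] at h1
      exact h1.comp_ofReal
    have hVder : ∀ v : ℝ, HasDerivAt (fun v : ℝ => ((v : ℝ) : ℂ)) 1 v := fun v =>
      (hasDerivAt_id (v : ℂ)).comp_ofReal
    -- antiderivative on [0,1]: F v = (1 - v) * exp (c v) / c + exp (c v) / c ^ 2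
    have hFder : ∀ v : ℝ, HasDerivAt
        (fun v : ℝ => (1 - (v:ℂ)) * Complex.exp (c * v) / c + Complex.exp (c * v) / c ^ 2)
        (Complex.exp (c * v) * ((1 - v : ℝ) : ℂ)) v := by
      intro v
      have h1 := (((hVder v).const_sub 1).mul (hEder v)).div_const c
      have h2 := (hEder v).div_const (c ^ 2)
      have := h1.add h2
      convert this using 1
      · rfl
      · rfl
      push_cast
      field_simp
      ring
    -- antiderivative on [-1,0]: G v = (1 + v) * exp (c v) / c - exp (c v) / c ^ 2
    have hGder : ∀ v : ℝ, HasDerivAt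
        (fun v : ℝ => (1 + (v:ℂ)) * Complex.exp (c * v) / c - Complex.exp (c * v) / c ^ 2)
        (Complex.exp (c * v) * ((1 + v : ℝ) : ℂ)) v := by
      intro v
      have h1 := (((hVder v).const_add 1).mul (hEder v)).div_const c
      have h2 := (hEder v).div_const (c ^ 2)
      have := h1.sub h2
      convert this using 1
      · rfl
      · rfl
      push_cast
      field_simp
      ring
    have hint : ∀ (a b : ℝ) (g : ℝ → ℝ), Continuous g → IntervalIntegrable
        (fun v : ℝ => Complex.exp (c * v) * ((g v : ℝ) : ℂ)) volume a b := by
      intro a b g hg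
      apply Continuous.intervalIntegrable
      exact (Complex.continuous_exp.comp (continuous_const.mul Complex.continuous_ofReal)).mul
        (Complex.continuous_ofReal.comp hg)
    have hIL : (∫ v in (-1:ℝ)..0,
        Complex.exp ((-2 * π * v * x : ℝ) * Complex.I) * ((1 + v : ℝ) : ℂ))
        = 1/c - 1/c^2 + Complex.exp (-c) / c ^ 2 := by
      have : (∫ v in (-1:ℝ)..0,
          Complex.exp ((-2 * π * v * x : ℝ) * Complex.I) * ((1 + v : ℝ) : ℂ))
          = ∫ v in (-1:ℝ)..0, Complex.exp (c * v) * ((1 + v : ℝ) : ℂ) := by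
        apply intervalIntegral.integral_congr
        intro v _
        simp only [hexp]
      rw [this, intervalIntegral.integral_eq_sub_of_hasDerivAt (fun v _ => hGder v)
        (hint _ _ _ (continuous_const.add continuous_id))]
      push_cast
      simp only [mul_neg_one, mul_zero, mul_one, Complex.exp_zero]
      field_simp
      ring
    have hIR : (∫ v in (0:ℝ)..1,
        Complex.exp ((-2 * π * v * x : ℝ) * Complex.I) * ((1 - v : ℝ) : ℂ))
        = Complex.exp c / c ^ 2 - 1/c - 1/c^2 := by
      have : (∫ v in (0:ℝ)..1,
          Complex.exp ((-2 * π * v * x : ℝ) * Complex.I) * ((1 - v : ℝ) : ℂ))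
          = ∫ v in (0:ℝ)..1, Complex.exp (c * v) * ((1 - v : ℝ) : ℂ) := by
        apply intervalIntegral.integral_congr
        intro v _
        simp only [hexp]
      rw [this, intervalIntegral.integral_eq_sub_of_hasDerivAt (fun v _ => hFder v)
        (hint _ _ _ (continuous_const.sub continuous_id))]
      push_cast
      simp only [mul_neg_one, mul_zero, mul_one, Complex.exp_zero]
      field_simp
      ring
    rw [hIL, hIR]
    have hsum : Complex.exp c + Complex.exp (-c) = ((2 * Real.cos (2 * π * x) : ℝ) : ℂ) := by
      rw [hc]
      rw [show -(((-2 * π * x : ℝ) : ℂ) * Complex.I) = ((2 * π * x : ℝ) : ℂ) * Complex.I by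
        push_cast; ring]
      rw [Complex.exp_mul_I, Complex.exp_mul_I]
      rw [show ((-2 * π * x : ℝ) : ℂ) = -((2 * π * x : ℝ) : ℂ) by push_cast; ring]
      rw [Complex.cos_neg, Complex.sin_neg]
      push_cast
      ring_nf
    have hc2 : c ^ 2 = ((-(4 * π ^ 2 * x ^ 2) : ℝ) : ℂ) := by
      rw [hc, mul_pow, Complex.I_sq]
      push_cast
      ring
    have hgoal : (1/c - 1/c^2 + Complex.exp (-c) / c ^ 2) +
        (Complex.exp c / c ^ 2 - 1/c - 1/c^2)
        = (Complex.exp c + Complex.exp (-c) - 2) / c ^ 2 := by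
      ring
    rw [hgoal, hsum, hc2]
    rw [show ((2 * Real.cos (2 * π * x) : ℝ) : ℂ) - 2
        = (((2 * Real.cos (2 * π * x) - 2 : ℝ)) : ℂ) by push_cast; ring]
    rw [← Complex.ofReal_div, Complex.ofReal_inj]
    have hcos : Real.cos (2 * π * x) = 1 - 2 * Real.sin (π * x) ^ 2 := by
      rw [show 2 * π * x = 2 * (π * x) by ring, Real.cos_two_mul', Real.cos_sq']
      ring
    rw [hcos, sinc, if_neg hx, div_pow]
    have hπx : (π * x) ≠ 0 := by
      have := Real.pi_pos
      intro h0
      apply hx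
      nlinarith
    field_simp
    ring

/-- Complex version of the partition of unity, via Poisson summation. -/
lemma complex_version (y : ℝ) : ∑' r : ℤ, ((sinc (y - (r : ℝ)) ^ 2 : ℝ) : ℂ) = 1 := by
  set f : ℝ → ℂ := fun v => Complex.exp ((2 * π * v * y : ℝ) * Complex.I) * (tri v : ℂ) with hf
  have hcont : Continuous f := by
    apply Continuous.mul
    · exact Complex.continuous_exp.comp
        ((Complex.continuous_ofReal.comp (by continuity)).mul continuous_const)
    · exact Complex.continuous_ofReal.comp tri_continuous
  have hFf : ∀ w : ℝ, 𝓕 f w = ((sinc (y - w) ^ 2 : ℝ) : ℂ) := by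
    intro w
    rw [Real.fourier_real_eq_integral_exp_smul]
    have heq : ∀ v : ℝ, Complex.exp ((-2 * π * v * w : ℝ) * Complex.I) • f v
        = Complex.exp ((-2 * π * v * (w - y) : ℝ) * Complex.I) * (tri v : ℂ) := by
      intro v
      rw [hf, smul_eq_mul, ← mul_assoc, ← Complex.exp_add]
      congr 2
      push_cast
      ring
    simp only [heq]
    rw [key_integral (w - y)]
    rw [show w - y = -(y - w) by ring, sinc_neg]
  have hdecay : f =O[Filter.cocompact ℝ] fun x : ℝ => |x| ^ (-2 : ℝ) := by
    rw [Asymptotics.isBigO_iff]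
    refine ⟨1, ?_⟩
    have hev : ∀ᶠ x : ℝ in Filter.cocompact ℝ, (1 : ℝ) < |x| := by
      rw [Filter.eventually_iff]
      apply Filter.mem_cocompact.mpr
      refine ⟨Metric.closedBall 0 1, isCompact_closedBall 0 1, ?_⟩
      intro x hx
      simp only [Set.mem_compl_iff, Metric.mem_closedBall, Real.dist_eq, sub_zero, not_le] at hx
      simpa using hx
    filter_upwards [hev] with x hx
    have h0 : tri x = 0 := tri_eq_zero hx.le
    rw [hf]
    simp only [h0, Complex.ofReal_zero, mul_zero, norm_zero]
    positivity
  have hFsum : Summable fun n : ℤ => 𝓕 f n := by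
    simp only [hFf]
    apply summable_of_isBigO (g := fun n : ℤ => 1 / (n : ℝ) ^ 2)
      (Real.summable_one_div_int_pow.mpr one_lt_two)
    rw [Asymptotics.isBigO_iff]
    refine ⟨4 * (1 + y ^ 2), ?_⟩
    have hev : ∀ᶠ n : ℤ in Filter.cofinite, n ≠ 0 := by
      have := (Set.finite_singleton (0 : ℤ)).eventually_cofinite_notMem
      simpa using this
    filter_upwards [hev] with n hn
    have hn1 : (1 : ℝ) ≤ |(n : ℝ)| := by
      have h1 : (1 : ℤ) ≤ |n| := Int.one_le_abs hn
      calc (1 : ℝ) = ((1 : ℤ) : ℝ) := by norm_num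
        _ ≤ ((|n| : ℤ) : ℝ) := by exact_mod_cast h1
        _ = |(n : ℝ)| := by push_cast; ring
    have hn2 : (1 : ℝ) ≤ (n : ℝ) ^ 2 := by
      have h2 := _root_.sq_abs ((n : ℝ))
      nlinarith [mul_le_mul hn1 hn1 (by norm_num : (0:ℝ) ≤ 1) (abs_nonneg ((n:ℝ)))]
    have hb1 : sinc (y - (n : ℝ)) ^ 2 ≤ 2 / (1 + (y - n) ^ 2) := sinc_sq_le_two_div _
    have hkey : (1 : ℝ) + (n : ℝ) ^ 2 ≤ 2 * (1 + y ^ 2) * (1 + (y - n) ^ 2) := by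
      nlinarith [sq_nonneg (y + (y - (n:ℝ))), sq_nonneg (y * (y - (n:ℝ)))]
    have hpos1 : (0 : ℝ) < 1 + (y - (n : ℝ)) ^ 2 := by positivity
    have hpos2 : (0 : ℝ) < (n : ℝ) ^ 2 := by nlinarith
    have hb2 : 2 / (1 + (y - (n : ℝ)) ^ 2) ≤ 4 * (1 + y ^ 2) / (1 + (n : ℝ) ^ 2) := by
      rw [div_le_div_iff₀ hpos1 (by positivity)]
      nlinarith
    have hb3 : 4 * (1 + y ^ 2) / (1 + (n : ℝ) ^ 2) ≤ 4 * (1 + y ^ 2) / (n : ℝ) ^ 2 := by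
      apply div_le_div_of_nonneg_left (by positivity) hpos2
      linarith
    have hnorm : ‖((sinc (y - (n : ℝ)) ^ 2 : ℝ) : ℂ)‖ = sinc (y - (n : ℝ)) ^ 2 := by
      rw [Complex.norm_real, Real.norm_eq_abs, _root_.abs_of_nonneg (sq_nonneg _)]
    rw [hnorm]
    have hnorm2 : ‖1 / (n : ℝ) ^ 2‖ = 1 / (n : ℝ) ^ 2 := by
      rw [Real.norm_eq_abs, _root_.abs_of_nonneg (by positivity)]
    rw [hnorm2]
    calc sinc (y - (n : ℝ)) ^ 2 ≤ 4 * (1 + y ^ 2) / (n : ℝ) ^ 2 := by linarith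
      _ = 4 * (1 + y ^ 2) * (1 / (n : ℝ) ^ 2) := by ring
  have hP := Real.tsum_eq_tsum_fourier_of_rpow_decay_of_summable hcont one_lt_two
    hdecay hFsum 0
  have hLHS : ∑' n : ℤ, f (0 + (n : ℝ)) = 1 := by
    rw [tsum_eq_single 0]
    · rw [hf]
      norm_num [tri_zero]
    · intro n hn
      have h1 : (1 : ℝ) ≤ |(n : ℝ)| := by
        have h1 : (1 : ℤ) ≤ |n| := Int.one_le_abs hn
        calc (1 : ℝ) = ((1 : ℤ) : ℝ) := by norm_num
          _ ≤ ((|n| : ℤ) : ℝ) := by exact_mod_cast h1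
          _ = |(n : ℝ)| := by push_cast; ring
      rw [hf]
      simp only [zero_add]
      rw [tri_eq_zero h1, Complex.ofReal_zero, mul_zero]
  have hRHS : (∑' n : ℤ, 𝓕 f n * fourier n (((0:ℝ)) : UnitAddCircle))
      = ∑' n : ℤ, ((sinc (y - (n : ℝ)) ^ 2 : ℝ) : ℂ) := by
    congr 1
    funext n
    rw [hFf, (by norm_num : (((0:ℝ)) : UnitAddCircle) = 0),
      fourier_eval_zero, mul_one]
  rw [hLHS, hRHS] at hP
  exact hP.symm

end SincPOU

/-- partition-of-unity identity for the squared sinc kernel: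
Σ_{r∈ℤ} sinc²(y - r) = 1 for all real y. -/
theorem sinc_sq_partition_of_unity (y : ℝ) :
    ∑' r : ℤ, sinc (y - (r : ℝ)) ^ 2 = 1 := by
  have h := SincPOU.complex_version y
  apply Complex.ofReal_injective
  rw [Complex.ofReal_tsum]
  simpa using h
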